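/- arXiv:1406.2714 — 2 statements merged into one kernel-verified Lean document; each statement's English description precedes it below -/
import Mathlib

section
/- For every even n > 2, the 3-uniform hypergraph M on vertex set {v_{ij} : 1 ≤ i ≤ n/2, j ∈ {1,2}} with edge set {{v_{ij}, v_{k1}, v_{k2}} : k < i} is an edge-maximal hypertree and has exactly n(n−2)/4 = (1/2)·C(n,2) − n/4 edges. -/
variable {V : Type*} [DecidableEq V]

/-- The list of consecutive `k`-windows (as finsets) of a vertex sequence. -/
def windows (k : ℕ) (w : List V) : List (Finset V) :=
  (List.range (w.length + 1 - k)).map fun i => ((w.drop i).take k).toFinset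

/-- `w` is the vertex sequence of a chain: `v₁ ≠ v_l`, each window is a `k`-set,
and the `l - k + 1` window edges are pairwise distinct. -/
def IsChainSeq (k : ℕ) (w : List V) : Prop :=
  k ≤ w.length ∧ w.head? ≠ w.getLast? ∧
  (∀ e ∈ windows k w, e.card = k) ∧ (windows k w).Nodup

/-- `w` is the vertex sequence of a semicycle: `v₁ = v_l`, each window is a `k`-set,
and the `l - k + 1` window edges are pairwise distinct. -/
def IsSemicycleSeq (k : ℕ) (w : List V) : Prop :=
  k ≤ w.length ∧ w.head? = w.getLast? ∧
  (∀ e ∈ windows k w, e.card = k) ∧ (windows k w).Nodup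

/-- A hypergraph with edge set `E` contains no semicycle as a subhypergraph. -/
def SemicycleFree (k : ℕ) (E : Finset (Finset V)) : Prop :=
  ¬ ∃ w : List V, IsSemicycleSeq k w ∧ ∀ e ∈ windows k w, e ∈ E

/-- Every two distinct vertices of `S` lie in a common chain subhypergraph of `E`. -/
def ChainConnOn (k : ℕ) (S : Finset V) (E : Finset (Finset V)) : Prop :=
  ∀ u ∈ S, ∀ v ∈ S, u ≠ v →
    ∃ w : List V, IsChainSeq k w ∧ (∀ e ∈ windows k w, e ∈ E) ∧ u ∈ w ∧ v ∈ w

/-- Chain-connectedness on the whole (finite) vertex type. -/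
def ChainConn [Fintype V] (k : ℕ) (E : Finset (Finset V)) : Prop :=
  ChainConnOn k Finset.univ E

/-- A `k`-uniform hypertree: chain-connected and semicycle-free. -/
def IsHypertree [Fintype V] (k : ℕ) (E : Finset (Finset V)) : Prop :=
  (∀ e ∈ E, e.card = k) ∧ ChainConn k E ∧ SemicycleFree k E

/-- Every chain subhypergraph of `E` has length (number of edges) at most `l`. -/
def ChainsLenLE (k l : ℕ) (E : Finset (Finset V)) : Prop :=
  ∀ w : List V, IsChainSeq k w → (∀ e ∈ windows k w, e ∈ E) →
    w.length + 1 - k ≤ l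

/-- An `l`-hypertree: a hypertree all of whose chains have length at most `l`. -/
def IsLHypertree [Fintype V] (k l : ℕ) (E : Finset (Finset V)) : Prop :=
  IsHypertree k E ∧ ChainsLenLE k l E

/-- Edge-minimal: deleting any edge destroys chain-connectedness. -/
def EdgeMinimal [Fintype V] (k : ℕ) (E : Finset (Finset V)) : Prop :=
  ∀ e ∈ E, ¬ ChainConn k (E.erase e)

/-- Edge-maximal: adding any new `k`-set as an edge creates a semicycle. -/
def EdgeMaximal [Fintype V] (k : ℕ) (E : Finset (Finset V)) : Prop :=
  ∀ s : Finset V, s.card = k → s ∉ E → ¬ SemicycleFree k (insert s E)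

/-- `S` is a (tight) star subhypergraph of `E`: a nonempty set of edges of `E`
all containing a common `(k-1)`-set kernel. -/
def IsStarSub (k : ℕ) (E S : Finset (Finset V)) : Prop :=
  S ⊆ E ∧ S.Nonempty ∧ ∃ K : Finset V, K.card = k - 1 ∧ ∀ e ∈ S, K ⊆ e

/-- `S` is a maximal star subhypergraph of `E`. -/
def IsMaxStar (k : ℕ) (E S : Finset (Finset V)) : Prop :=
  IsStarSub k E S ∧ ∀ T, IsStarSub k E T → S ⊆ T → S = T


/-! ### Auxiliary lemmas -/

section Aux

theorem window_eq (w : List V) (i : ℕ) (h0 : i < w.length) (h1 : i+1 < w.length)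
    (h2 : i + 2 < w.length) :
    ((w.drop i).take 3).toFinset = {w[i], w[i+1], w[i+2]} := by
  have : (w.drop i).take 3 = [w[i], w[i+1], w[i+2]] := by
    apply List.ext_getElem
    · simp; omega
    · intro j hj hj'
      have : j < 3 := by simp at hj'; omega
      interval_cases j <;> simp [List.getElem_take, List.getElem_drop]
  rw [this]; simp

theorem mem_windows (w : List V) (i : ℕ) (h : i + 3 ≤ w.length) :
    ((w.drop i).take 3).toFinset ∈ windows 3 w := by
  simp only [windows, List.mem_map, List.mem_range]
  exact ⟨i, by omega, rfl⟩

theorem windows_nodup_ne (w : List V) (hnd : (windows 3 w).Nodup) (i j : ℕ)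
    (hi : i + 3 ≤ w.length) (hj : j + 3 ≤ w.length) (hij : i ≠ j) :
    ((w.drop i).take 3).toFinset ≠ ((w.drop j).take 3).toFinset := by
  intro he
  have h1 : (windows 3 w)[i]'(by simp [windows]; omega)
      = (windows 3 w)[j]'(by simp [windows]; omega) := by
    simp only [windows, List.getElem_map, List.getElem_range]
    exact he
  exact hij (hnd.getElem_inj_iff.mp h1)

theorem windows_triple (a b c : V) : windows 3 [a,b,c] = [{a,b,c}] := by
  simp [windows, List.range_succ]

theorem windows_quad (a b c d : V) : windows 3 [a,b,c,d] = [{a,b,c},{b,c,d}] := by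
  simp [windows, List.range_succ]

theorem windows_quint (a b c d e : V) :
    windows 3 [a,b,c,d,e] = [{a,b,c},{b,c,d},{c,d,e}] := by
  simp [windows, List.range_succ]

theorem card3 {a b c : V} (h1 : a ≠ b) (h2 : a ≠ c) (h3 : b ≠ c) :
    ({a,b,c} : Finset V).card = 3 := by
  rw [Finset.card_insert_of_notMem (by simp [h1, h2]),
    Finset.card_insert_of_notMem (by simp [h3]), Finset.card_singleton]

theorem card3_ne {a b c : V} (h : ({a,b,c} : Finset V).card = 3) :
    a ≠ b ∧ a ≠ c ∧ b ≠ c := by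
  refine ⟨?_, ?_, ?_⟩ <;> rintro rfl
  · have he : ({a,a,c} : Finset V) = {a,c} := by ext x; simp; try tauto
    rw [he] at h
    have h2 := Finset.card_insert_le a ({c} : Finset V)
    rw [Finset.card_singleton] at h2; omega
  · have he : ({a,b,a} : Finset V) = {a,b} := by ext x; simp; try tauto
    rw [he] at h
    have h2 := Finset.card_insert_le a ({b} : Finset V)
    rw [Finset.card_singleton] at h2; omega
  · have he : ({a,b,b} : Finset V) = {a,b} := by ext x; simp; try tauto
    rw [he] at h
    have h2 := Finset.card_insert_le a ({b} : Finset V)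
    rw [Finset.card_singleton] at h2; omega

theorem head_last (w : List V) (h : 0 < w.length) :
    w.head? = some (w[0]'h) ∧ w.getLast? = some (w[w.length-1]'(by omega)) := by
  have hne : w ≠ [] := List.length_pos_iff.mp h
  constructor
  · rw [List.head?_eq_head hne, List.head_eq_getElem]
  · rw [List.getLast?_eq_getLast hne, List.getLast_eq_getElem]

end Aux

section M

variable {m : ℕ} {E : Finset (Finset (Fin m × Fin 2))}
  (hE : ∀ e, e ∈ E ↔ ∃ i k : Fin m, ∃ j : Fin 2,
      (k : ℕ) < (i : ℕ) ∧ e = {(i, j), (k, 0), (k, 1)})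

theorem pigeon {x y z : Fin m × Fin 2} (hxy : x ≠ y) (h1 : x.1 = y.1)
    (h2 : x.1 = z.1) : z = x ∨ z = y := by
  have hj : (x.2 : ℕ) ≠ (y.2 : ℕ) := by
    intro h; exact hxy (Prod.ext h1 (Fin.ext h))
  have hx2 : (x.2 : ℕ) < 2 := x.2.2
  have hy2 : (y.2 : ℕ) < 2 := y.2.2
  have hz2 : (z.2 : ℕ) < 2 := z.2.2
  have hd : (z.2 : ℕ) = (x.2 : ℕ) ∨ (z.2 : ℕ) = (y.2 : ℕ) := by omega
  rcases hd with h | h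
  · exact Or.inl (Prod.ext h2.symm (Fin.ext h))
  · exact Or.inr (Prod.ext (h1 ▸ h2).symm (Fin.ext h))

theorem pair_eq {x y : Fin m × Fin 2} (hxy : x ≠ y) (h1 : x.1 = y.1) :
    ({x, y} : Finset (Fin m × Fin 2)) = {(x.1, 0), (x.1, 1)} := by
  have hj : (x.2 : ℕ) ≠ (y.2 : ℕ) := by
    intro h; exact hxy (Prod.ext h1 (Fin.ext h))
  have hx2 : (x.2 : ℕ) < 2 := x.2.2
  have hy2 : (y.2 : ℕ) < 2 := y.2.2
  have hd : (x.2 : ℕ) = 0 ∨ (x.2 : ℕ) = 1 := by omega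
  rcases hd with h | h
  · have hx : x = (x.1, 0) := Prod.ext rfl (Fin.ext (by rw [h, Fin.val_zero]))
    have hy : y = (x.1, 1) := Prod.ext h1.symm (Fin.ext (by rw [Fin.val_one]; omega))
    rw [← hx, ← hy]
  · have hx : x = (x.1, 1) := Prod.ext rfl (Fin.ext (by rw [h, Fin.val_one]))
    have hy : y = (x.1, 0) := Prod.ext h1.symm (Fin.ext (by rw [Fin.val_zero]; omega))
    rw [← hx, ← hy, Finset.pair_comm]

theorem mem_edge {e : Finset (Fin m × Fin 2)} {i k : Fin m} {j : Fin 2}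
    (he : e = {(i, j), (k, 0), (k, 1)}) {x : Fin m × Fin 2} (hx : x ∈ e) :
    x = (i, j) ∨ x.1 = k := by
  subst he
  simp only [Finset.mem_insert, Finset.mem_singleton] at hx
  rcases hx with h | h | h
  · exact Or.inl h
  · exact Or.inr (by rw [h])
  · exact Or.inr (by rw [h])

include hE in
theorem inter_pair {e f : Finset (Fin m × Fin 2)} (he : e ∈ E) (hf : f ∈ E)
    (hef : e ≠ f) {x y : Fin m × Fin 2} (hxe : x ∈ e) (hxf : x ∈ f)
    (hye : y ∈ e) (hyf : y ∈ f) (hxy : x ≠ y) : x.1 = y.1 := by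
  obtain ⟨i, k, j, hki, hee⟩ := (hE e).mp he
  obtain ⟨i', k', j', hki', hff⟩ := (hE f).mp hf
  have hx1 := mem_edge hee hxe
  have hx2 := mem_edge hff hxf
  have hy1 := mem_edge hee hye
  have hy2 := mem_edge hff hyf
  by_contra hne
  rcases hx1 with hx1 | hx1 <;> rcases hy1 with hy1 | hy1
  · exact hxy (hx1.trans hy1.symm)
  · rcases hx2 with hx2 | hx2
    · have hii : i = i' := congrArg Prod.fst (hx2.symm.trans hx1) |>.symm
      have hjj : j = j' := congrArg Prod.snd (hx2.symm.trans hx1) |>.symm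
      rcases hy2 with hy2 | hy2
      · exact hxy (hx2.trans hy2.symm)
      · exact hef (by rw [hee, hff, hii, hjj, hy1.symm.trans hy2])
    · rcases hy2 with hy2 | hy2
      · have h1 : (i : ℕ) = (k' : ℕ) := by
          rw [hx1] at hx2; simpa using congrArg Fin.val hx2
        have h2 : (k : ℕ) = (i' : ℕ) := by
          rw [hy2] at hy1; simpa using congrArg Fin.val hy1.symm
        omega
      · exact hne (hx2.trans hy2.symm)
  · rcases hy2 with hy2 | hy2
    · have hii : i = i' := congrArg Prod.fst (hy2.symm.trans hy1) |>.symm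
      have hjj : j = j' := congrArg Prod.snd (hy2.symm.trans hy1) |>.symm
      rcases hx2 with hx2 | hx2
      · exact hxy (hx2.trans hy2.symm)
      · exact hef (by rw [hee, hff, hii, hjj, hx1.symm.trans hx2])
    · rcases hx2 with hx2 | hx2
      · have h1 : (i : ℕ) = (k' : ℕ) := by
          rw [hy1] at hy2; simpa using congrArg Fin.val hy2
        have h2 : (k : ℕ) = (i' : ℕ) := by
          rw [hx2] at hx1; simpa using congrArg Fin.val hx1.symm
        omega
      · exact hne (hx2.trans hy2.symm)
  · exact hne (hx1.trans hy1.symm)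

include hE in
theorem M_semicycle_free : SemicycleFree 3 E := by
  rintro ⟨w, ⟨hlen, hhl, hcard, hnd⟩, hmem⟩
  have hL3 : 3 ≤ w.length := hlen
  obtain ⟨hh, hl⟩ := head_last w (by omega)
  rw [hh, hl] at hhl
  have h0L : w[0]'(by omega) = w[w.length-1]'(by omega) := Option.some.inj hhl
  rcases Nat.lt_or_ge w.length 5 with h5 | h5
  · rcases Nat.lt_or_ge w.length 4 with h4 | h4
    · -- length 3
      have hc := hcard _ (mem_windows w 0 (by omega))
      rw [window_eq w 0 (by omega) (by omega) (by omega)] at hc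
      norm_num at hc
      have := (card3_ne hc).2.1
      have h02 : w[0]'(by omega) = w[2]'(by omega) := by
        convert h0L using 2; omega
      exact this h02
    · -- length 4
      have h03 : w[0]'(by omega) = w[3]'(by omega) := by
        convert h0L using 2; omega
      have hne := windows_nodup_ne w hnd 0 1 (by omega) (by omega) (by omega)
      rw [window_eq w 0 (by omega) (by omega) (by omega),
          window_eq w 1 (by omega) (by omega) (by omega)] at hne
      norm_num at hne
      apply hne
      rw [h03]
      ext x; simp; tauto
  · -- length ≥ 5
    have hw0 : (List.take 3 (List.drop 0 w)).toFinset
        = {w[0]'(by omega), w[1]'(by omega), w[2]'(by omega)} := by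
      rw [window_eq w 0 (by omega) (by omega) (by omega)]
    have hw1 : (List.take 3 (List.drop 1 w)).toFinset
        = {w[1]'(by omega), w[2]'(by omega), w[3]'(by omega)} := by
      rw [window_eq w 1 (by omega) (by omega) (by omega)]
    have hw2 : (List.take 3 (List.drop 2 w)).toFinset
        = {w[2]'(by omega), w[3]'(by omega), w[4]'(by omega)} := by
      rw [window_eq w 2 (by omega) (by omega) (by omega)]
    have he0 := hmem _ (mem_windows w 0 (by omega))
    have he1 := hmem _ (mem_windows w 1 (by omega))
    have he2 := hmem _ (mem_windows w 2 (by omega))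
    have hne01 := windows_nodup_ne w hnd 0 1 (by omega) (by omega) (by omega)
    have hne12 := windows_nodup_ne w hnd 1 2 (by omega) (by omega) (by omega)
    rw [hw0, hw1] at hne01
    rw [hw1, hw2] at hne12
    rw [hw0] at he0; rw [hw1] at he1; rw [hw2] at he2
    have hc1 := hcard _ (mem_windows w 1 (by omega))
    rw [hw1] at hc1
    obtain ⟨h12, h13, h23⟩ := card3_ne hc1
    have key1 : (w[1]'(by omega)).1 = (w[2]'(by omega)).1 :=
      inter_pair hE he0 he1 hne01 (by simp) (by simp) (by simp) (by simp) h12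
    have key2 : (w[2]'(by omega)).1 = (w[3]'(by omega)).1 :=
      inter_pair hE he1 he2 hne12 (by simp) (by simp) (by simp) (by simp) h23
    rcases pigeon h12 key1 (key1.trans key2) with h | h
    · exact h13 h.symm
    · exact h23 h.symm

end M

section Chain
variable {V : Type*} [DecidableEq V]

theorem isChain3_triple {u x v : V} (h2 : u ≠ v) (hc : ({u,x,v} : Finset V).card = 3) :
    IsChainSeq 3 [u, x, v] := by
  refine ⟨by simp, by simp [h2], ?_, by rw [windows_triple]; simp⟩
  rw [windows_triple]; simpa using hc

theorem isChain3_quad {u x y v : V} (h : u ≠ v) (hc0 : ({u,x,y} : Finset V).card = 3)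
    (hc1 : ({x,y,v} : Finset V).card = 3) (hW : ({u,x,y} : Finset V) ≠ {x,y,v}) :
    IsChainSeq 3 [u, x, y, v] := by
  refine ⟨by simp, by simp [h], ?_, by rw [windows_quad]; simp [hW]⟩
  rw [windows_quad]
  intro e he
  rcases List.mem_pair.mp he with rfl | rfl
  · exact hc0
  · exact hc1

end Chain

section M2
variable {m : ℕ} {E : Finset (Finset (Fin m × Fin 2))}
  (hE : ∀ e, e ∈ E ↔ ∃ i k : Fin m, ∃ j : Fin 2,
      (k : ℕ) < (i : ℕ) ∧ e = {(i, j), (k, 0), (k, 1)})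

/-- partner of a vertex -/
def pr {m : ℕ} (x : Fin m × Fin 2) : Fin m × Fin 2 := (x.1, ⟨1 - (x.2 : ℕ), by omega⟩)

theorem pr_ne {x : Fin m × Fin 2} : x ≠ pr x := by
  intro h
  have := congrArg (fun t => ((t.2 : Fin 2) : ℕ)) h
  simp [pr] at this
  omega

theorem pr_fst {x : Fin m × Fin 2} : (pr x).1 = x.1 := rfl

theorem pair_pr (x : Fin m × Fin 2) :
    ({x, pr x} : Finset (Fin m × Fin 2)) = {(x.1, 0), (x.1, 1)} :=
  pair_eq pr_ne rfl

include hE in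
theorem edge_mem {t : Fin m × Fin 2} {k : Fin m} (h : (k : ℕ) < (t.1 : ℕ)) :
    ({t, (k, 0), (k, 1)} : Finset (Fin m × Fin 2)) ∈ E :=
  (hE _).mpr ⟨t.1, k, t.2, h, rfl⟩

include hE in
theorem M_chain_conn (hm : 2 ≤ m) : ChainConn 3 E := by
  intro u _ v _ huv
  rcases Nat.lt_trichotomy (u.1 : ℕ) (v.1 : ℕ) with hlt | heq | hlt
  · -- u.1 < v.1 : single edge {v, (u.1,0), (u.1,1)}
    refine ⟨[v, pr u, u], isChain3_triple huv.symm ?_, ?_, by simp, by simp⟩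
    · apply card3
      · intro h; exact absurd (congrArg (fun t => (t.1 : ℕ)) h) (by simp [pr]; omega)
      · exact huv.symm
      · exact fun h => pr_ne h.symm
    · intro e he
      rw [windows_triple] at he
      rcases List.mem_singleton.mp he with rfl
      have h1 : ({v, pr u, u} : Finset (Fin m × Fin 2)) = insert v {u, pr u} := by
        ext x; simp; tauto
      rw [h1, pair_pr]
      exact edge_mem hE hlt
  · -- u.1 = v.1, u.2 ≠ v.2
    have hfst : u.1 = v.1 := Fin.ext heq
    rcases Nat.eq_zero_or_pos (u.1 : ℕ) with h0 | h0
    · -- u.1 = 0 : single edge {(1,0), (u.1,0),(u.1,1)}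
      set t : Fin m × Fin 2 := (⟨1, by omega⟩, 0) with ht
      refine ⟨[u, t, v], isChain3_triple huv ?_, ?_, by simp, by simp⟩
      · apply card3
        · intro h; have := congrArg (fun t => ((t.1 : Fin m) : ℕ)) h; simp [ht] at this; omega
        · exact huv
        · intro h; have := congrArg (fun t => ((t.1 : Fin m) : ℕ)) h; simp [ht] at this; omega
      · intro e he
        rw [windows_triple] at he
        rcases List.mem_singleton.mp he with rfl
        have h1 : ({u, t, v} : Finset (Fin m × Fin 2)) = insert t {u, v} := by
          ext x; simp; tauto
        rw [h1, pair_eq huv hfst]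
        exact edge_mem hE (by simp [ht]; omega)
    · -- u.1 > 0 : two edges through (0,0),(0,1)
      set z0 : Fin m × Fin 2 := (⟨0, by omega⟩, 0) with hz0
      set z1 : Fin m × Fin 2 := (⟨0, by omega⟩, 1) with hz1
      have hz01 : z0 ≠ z1 := by
        intro h; have := congrArg (fun t => ((t.2 : Fin 2) : ℕ)) h; simp [hz0, hz1] at this
      have huz0 : u ≠ z0 := by
        intro h; have := congrArg (fun t => ((t.1 : Fin m) : ℕ)) h; simp [hz0] at this; omega
      have huz1 : u ≠ z1 := by
        intro h; have := congrArg (fun t => ((t.1 : Fin m) : ℕ)) h; simp [hz1] at this; omega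
      have hvz0 : v ≠ z0 := by
        intro h; have := congrArg (fun t => ((t.1 : Fin m) : ℕ)) h; simp [hz0] at this; omega
      have hvz1 : v ≠ z1 := by
        intro h; have := congrArg (fun t => ((t.1 : Fin m) : ℕ)) h; simp [hz1] at this; omega
      have hW : ({u, z0, z1} : Finset (Fin m × Fin 2)) ≠ {z0, z1, v} := by
        intro h
        have : u ∈ ({z0, z1, v} : Finset (Fin m × Fin 2)) := by rw [← h]; simp
        simp only [Finset.mem_insert, Finset.mem_singleton] at this
        rcases this with h' | h' | h'
        exacts [huz0 h', huz1 h', huv h']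
      refine ⟨[u, z0, z1, v], isChain3_quad huv (card3 huz0 huz1 hz01)
        (card3 hz01 ?_ ?_) hW, ?_, by simp, by simp⟩
      · exact fun h => hvz0 h.symm
      · exact fun h => hvz1 h.symm
      · intro e he
        rw [windows_quad] at he
        rcases List.mem_pair.mp he with rfl | rfl
        · exact edge_mem hE (by simp [hz0, hz1]; omega)
        · have h1 : ({z0, z1, v} : Finset (Fin m × Fin 2)) = {v, z0, z1} := by
            ext x; simp; tauto
          rw [h1]
          exact edge_mem hE (by simp [hz0, hz1]; omega)
  · -- v.1 < u.1
    refine ⟨[u, pr v, v], isChain3_triple huv ?_, ?_, by simp, by simp⟩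
    · apply card3
      · intro h; exact absurd (congrArg (fun t => ((t.1 : Fin m) : ℕ)) h) (by simp [pr]; omega)
      · exact huv
      · exact fun h => pr_ne h.symm
    · intro e he
      rw [windows_triple] at he
      rcases List.mem_singleton.mp he with rfl
      have h1 : ({u, pr v, v} : Finset (Fin m × Fin 2)) = insert u {v, pr v} := by
        ext x; simp; tauto
      rw [h1, pair_pr]
      exact edge_mem hE hlt

end M2

section M3
variable {m : ℕ} {E : Finset (Finset (Fin m × Fin 2))}
  (hE : ∀ e, e ∈ E ↔ ∃ i k : Fin m, ∃ j : Fin 2,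
      (k : ℕ) < (i : ℕ) ∧ e = {(i, j), (k, 0), (k, 1)})

include hE in
theorem min_strict {a b c : Fin m × Fin 2} (hab : a ≠ b) (hac : a ≠ c) (hbc : b ≠ c)
    (hsE : ({a,b,c} : Finset (Fin m × Fin 2)) ∉ E)
    (h1 : (a.1 : ℕ) ≤ (b.1 : ℕ)) (h2 : (a.1 : ℕ) ≤ (c.1 : ℕ)) :
    (a.1 : ℕ) < (b.1 : ℕ) ∧ (a.1 : ℕ) < (c.1 : ℕ) := by
  have key : ∀ p q r : Fin m × Fin 2, p ≠ q → p ≠ r → q ≠ r →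
      ({p,q,r} : Finset (Fin m × Fin 2)) = {a,b,c} →
      (p.1 : ℕ) = (q.1 : ℕ) → (p.1 : ℕ) ≤ (r.1 : ℕ) → False := by
    intro p q r hpq hpr hqr hper hpq1 hpr1
    have hfst : p.1 = q.1 := Fin.ext hpq1
    have hrr : (p.1 : ℕ) ≠ (r.1 : ℕ) := by
      intro h
      rcases pigeon hpq hfst (Fin.ext h) with h' | h'
      exacts [hpr h'.symm, hqr h'.symm]
    have hlt : (p.1 : ℕ) < (r.1 : ℕ) := by omega
    apply hsE
    rw [← hper]
    have he : ({p,q,r} : Finset (Fin m × Fin 2)) = insert r {p, q} := by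
      ext t; simp; tauto
    rw [he, pair_eq hpq hfst]
    exact edge_mem hE hlt
  constructor
  · rcases Nat.lt_or_ge (a.1 : ℕ) (b.1 : ℕ) with h | h
    · exact h
    · exact (key a b c hab hac hbc rfl (by omega) h2).elim
  · rcases Nat.lt_or_ge (a.1 : ℕ) (c.1 : ℕ) with h | h
    · exact h
    · refine (key a c b hac hab (Ne.symm hbc) ?_ (by omega) h1).elim
      ext t; simp; tauto

include hE in
theorem build_cycle {x y z : Fin m × Fin 2} (hyz : y ≠ z)
    (hxy : (x.1 : ℕ) < (y.1 : ℕ)) (hxz : (x.1 : ℕ) < (z.1 : ℕ)) :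
    ∃ w : List (Fin m × Fin 2), IsSemicycleSeq 3 w ∧
      ∀ e ∈ windows 3 w, e ∈ insert ({x,y,z} : Finset (Fin m × Fin 2)) E := by
  have hxy' : x ≠ y := by intro h; rw [h] at hxy; omega
  have hxz' : x ≠ z := by intro h; rw [h] at hxz; omega
  have hpy : pr x ≠ y := by
    intro h; have := congrArg (fun t => ((t.1 : Fin m) : ℕ)) h; simp [pr] at this; omega
  have hpz : pr x ≠ z := by
    intro h; have := congrArg (fun t => ((t.1 : Fin m) : ℕ)) h; simp [pr] at this; omega
  refine ⟨[y, z, x, pr x, y], ⟨by simp, by simp, ?_, ?_⟩, ?_⟩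
  · rw [windows_quint]
    intro e he
    simp only [List.mem_cons, List.mem_singleton] at he
    rcases he with rfl | rfl | rfl | he
    · exact card3 hyz (fun h => hxy' h.symm) (fun h => hxz' h.symm)
    · exact card3 (fun h => hxz' h.symm) (fun h => hpz h.symm) (fun h => pr_ne h)
    · exact card3 pr_ne hxy' hpy
    · exact absurd he (by simp)
  · rw [windows_quint]
    have hAB : ({y,z,x} : Finset (Fin m × Fin 2)) ≠ {z, x, pr x} := by
      intro h
      have : y ∈ ({z, x, pr x} : Finset (Fin m × Fin 2)) := by rw [← h]; simp
      simp only [Finset.mem_insert, Finset.mem_singleton] at this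
      rcases this with h' | h' | h'
      exacts [hyz h', hxy' h'.symm, hpy h'.symm]
    have hAC : ({y,z,x} : Finset (Fin m × Fin 2)) ≠ {x, pr x, y} := by
      intro h
      have : z ∈ ({x, pr x, y} : Finset (Fin m × Fin 2)) := by
        rw [← h]; simp
      simp only [Finset.mem_insert, Finset.mem_singleton] at this
      rcases this with h' | h' | h'
      exacts [hxz' h'.symm, hpz h'.symm, hyz h'.symm]
    have hBC : ({z, x, pr x} : Finset (Fin m × Fin 2)) ≠ {x, pr x, y} := by
      intro h
      have : z ∈ ({x, pr x, y} : Finset (Fin m × Fin 2)) := by rw [← h]; simp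
      simp only [Finset.mem_insert, Finset.mem_singleton] at this
      rcases this with h' | h' | h'
      exacts [hxz' h'.symm, hpz h'.symm, hyz h'.symm]
    simp [List.nodup_cons, hAB, hAC, hBC]
  · rw [windows_quint]
    intro e he
    simp only [List.mem_cons, List.mem_singleton] at he
    rcases he with rfl | rfl | rfl | he
    · have h1 : ({y,z,x} : Finset (Fin m × Fin 2)) = {x,y,z} := by ext t; simp; tauto
      rw [h1]
      exact Finset.mem_insert_self _ _
    · have h1 : ({z, x, pr x} : Finset (Fin m × Fin 2)) = insert z {x, pr x} := rfl
      rw [h1, pair_pr]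
      exact Finset.mem_insert_of_mem (edge_mem hE hxz)
    · have h1 : ({x, pr x, y} : Finset (Fin m × Fin 2)) = insert y {x, pr x} := by
        ext t; simp; tauto
      rw [h1, pair_pr]
      exact Finset.mem_insert_of_mem (edge_mem hE hxy)
    · exact absurd he (by simp)

end M3

section M4
variable {m : ℕ} {E : Finset (Finset (Fin m × Fin 2))}
  (hE : ∀ e, e ∈ E ↔ ∃ i k : Fin m, ∃ j : Fin 2,
      (k : ℕ) < (i : ℕ) ∧ e = {(i, j), (k, 0), (k, 1)})

include hE in
theorem M_edge_max : EdgeMaximal 3 E := by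
  intro s hs3 hsE hfree
  obtain ⟨a, b, c, hab, hac, hbc, rfl⟩ := Finset.card_eq_three.mp hs3
  apply hfree
  have htri : ((a.1:ℕ) ≤ b.1 ∧ (a.1:ℕ) ≤ c.1) ∨ ((b.1:ℕ) ≤ a.1 ∧ (b.1:ℕ) ≤ c.1)
      ∨ ((c.1:ℕ) ≤ a.1 ∧ (c.1:ℕ) ≤ b.1) := by omega
  rcases htri with ⟨h1, h2⟩ | ⟨h1, h2⟩ | ⟨h1, h2⟩
  · obtain ⟨hs1, hs2⟩ := min_strict hE hab hac hbc hsE h1 h2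
    obtain ⟨w, hw1, hw2⟩ := build_cycle hE hbc hs1 hs2
    exact ⟨w, hw1, hw2⟩
  · have hper : ({b, a, c} : Finset (Fin m × Fin 2)) = {a, b, c} := by
      ext t; simp; tauto
    have hsE' : ({b, a, c} : Finset (Fin m × Fin 2)) ∉ E := by rw [hper]; exact hsE
    obtain ⟨hs1, hs2⟩ := min_strict hE (Ne.symm hab) hbc hac hsE' h1 h2
    obtain ⟨w, hw1, hw2⟩ := build_cycle hE hac hs1 hs2
    rw [hper] at hw2
    exact ⟨w, hw1, hw2⟩
  · have hper : ({c, a, b} : Finset (Fin m × Fin 2)) = {a, b, c} := by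
      ext t; simp; tauto
    have hsE' : ({c, a, b} : Finset (Fin m × Fin 2)) ∉ E := by rw [hper]; exact hsE
    obtain ⟨hs1, hs2⟩ := min_strict hE (Ne.symm hac) (Ne.symm hbc) hab hsE' h1 h2
    obtain ⟨w, hw1, hw2⟩ := build_cycle hE hab hs1 hs2
    rw [hper] at hw2
    exact ⟨w, hw1, hw2⟩

end M4

section M5
variable {m : ℕ} {E : Finset (Finset (Fin m × Fin 2))}
  (hE : ∀ e, e ∈ E ↔ ∃ i k : Fin m, ∃ j : Fin 2,
      (k : ℕ) < (i : ℕ) ∧ e = {(i, j), (k, 0), (k, 1)})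

include hE in
theorem M_card2 : E.card * 2 = m * (m - 1) * 2 := by
  classical
  set F : Finset ((Fin m × Fin m) × Fin 2) :=
    ((Finset.univ : Finset (Fin m × Fin m)).filter fun p => (p.2 : ℕ) < (p.1 : ℕ)) ×ˢ
      (Finset.univ : Finset (Fin 2)) with hF
  have hEeq : E = F.image
      (fun q => ({(q.1.1, q.2), (q.1.2, 0), (q.1.2, 1)} : Finset (Fin m × Fin 2))) := by
    ext e
    simp only [Finset.mem_image, hF, Finset.mem_product, Finset.mem_filter, Finset.mem_univ,
      true_and, and_true, hE]
    constructor
    · rintro ⟨i, k, j, hki, rfl⟩; exact ⟨((i, k), j), hki, rfl⟩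
    · rintro ⟨⟨⟨i, k⟩, j⟩, hki, rfl⟩; exact ⟨i, k, j, hki, rfl⟩
  have hinj : Set.InjOn (fun q : (Fin m × Fin m) × Fin 2 =>
      ({(q.1.1, q.2), (q.1.2, 0), (q.1.2, 1)} : Finset (Fin m × Fin 2))) F := by
    rintro ⟨⟨i, k⟩, j⟩ hq ⟨⟨i', k'⟩, j'⟩ hq' hee
    rw [Finset.mem_coe] at hq hq'
    simp only [hF, Finset.mem_product, Finset.mem_filter, Finset.mem_univ, true_and,
      and_true] at hq hq'
    have hq1 : (k : ℕ) < (i : ℕ) := hq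
    have hq1' : (k' : ℕ) < (i' : ℕ) := hq'
    simp only at hee
    have hkk : k = k' := by
      have h0 := mem_edge (e := ({(i, j), (k, 0), (k, 1)} : Finset (Fin m × Fin 2))) hee
        (x := (k, 0)) (by simp)
      have h1 := mem_edge (e := ({(i, j), (k, 0), (k, 1)} : Finset (Fin m × Fin 2))) hee
        (x := (k, 1)) (by simp)
      rcases h0 with h0 | h0
      · rcases h1 with h1 | h1
        · have := congrArg (fun t => ((t.2 : Fin 2) : ℕ)) (h0.trans h1.symm)
          simp at this
        · exact h1
      · exact h0
    subst hkk
    have hii := mem_edge (e := ({(i, j), (k, 0), (k, 1)} : Finset (Fin m × Fin 2))) hee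
      (x := (i, j)) (by simp)
    rcases hii with hii | hii
    · have h1 : i = i' := congrArg Prod.fst hii
      have h2 : j = j' := congrArg Prod.snd hii
      subst h1; subst h2; rfl
    · simp only at hii
      have hv : (i : ℕ) = (k : ℕ) := congrArg Fin.val hii
      omega
  rw [hEeq, Finset.card_image_of_injOn hinj, hF, Finset.card_product]
  have hfil : ((Finset.univ : Finset (Fin m × Fin m)).filter
      fun p => (p.2 : ℕ) < (p.1 : ℕ)).card = ∑ i : Fin m, (i : ℕ) := by
    rw [Finset.card_eq_sum_card_fiberwise
      (f := Prod.fst) (t := (Finset.univ : Finset (Fin m))) (fun x _ => Finset.mem_univ _)]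
    apply Finset.sum_congr rfl
    intro i _
    rw [← Fin.card_Iio (b := i)]
    apply Finset.card_bij (fun p _ => p.2)
    · rintro ⟨i', k⟩ hp
      simp only [Finset.mem_filter, Finset.mem_univ, true_and] at hp
      obtain ⟨h1, h2⟩ := hp
      have h2' : i' = i := h2
      subst h2'
      exact Finset.mem_Iio.mpr h1
    · rintro ⟨i1, k1⟩ h1 ⟨i2, k2⟩ h2 hk
      simp only [Finset.mem_filter, Finset.mem_univ, true_and] at h1 h2
      have hk' : k1 = k2 := hk
      subst hk'
      have e1 : i1 = i := h1.2
      have e2 : i2 = i := h2.2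
      rw [e1, e2]
    · intro k hk
      refine ⟨(i, k), ?_, rfl⟩
      simp only [Finset.mem_filter, Finset.mem_univ, true_and]
      have hki : k < i := Finset.mem_Iio.mp hk
      exact ⟨hki, trivial⟩
  rw [hfil, Finset.card_fin]
  rw [Fin.sum_univ_eq_sum_range (fun i => i), Finset.sum_range_id_mul_two]

end M5

/-- the 3-uniform hypergraph `M` is an edge-maximal hypertree with
exactly `n(n-2)/4` edges. -/
theorem stmt17 (n : ℕ) (hn : 2 < n) (hev : Even n)
    (E : Finset (Finset (Fin (n / 2) × Fin 2)))
    (hE : ∀ e, e ∈ E ↔ ∃ i k : Fin (n / 2), ∃ j : Fin 2,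
      (k : ℕ) < (i : ℕ) ∧ e = {(i, j), (k, 0), (k, 1)}) :
    IsHypertree 3 E ∧ EdgeMaximal 3 E ∧ E.card = n * (n - 2) / 4 := by
  have hpar : n % 2 = 0 := Nat.even_iff.mp hev
  have hm : 2 ≤ n / 2 := by omega
  refine ⟨⟨?_, M_chain_conn hE hm, M_semicycle_free hE⟩, M_edge_max hE, ?_⟩
  · intro e he
    obtain ⟨i, k, j, hki, rfl⟩ := (hE e).mp he
    apply card3
    · intro h
      have := congrArg (fun t => ((t.1 : Fin (n / 2)) : ℕ)) h
      simp at this; omega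
    · intro h
      have := congrArg (fun t => ((t.1 : Fin (n / 2)) : ℕ)) h
      simp at this; omega
    · intro h
      have := congrArg (fun t => ((t.2 : Fin 2) : ℕ)) h
      simp at this
  · have hcE : E.card = (n / 2) * (n / 2 - 1) :=
      Nat.eq_of_mul_eq_mul_right (by norm_num) (M_card2 hE)
    obtain ⟨u, hu⟩ : ∃ u, n = 2 * u + 4 := ⟨(n - 4) / 2, by omega⟩
    subst hu
    rw [hcE]
    rw [show (2 * u + 4) / 2 = u + 2 from by omega,
      show u + 2 - 1 = u + 1 from by omega,
      show 2 * u + 4 - 2 = 2 * u + 2 from by omega,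
      show (2 * u + 4) * (2 * u + 2) = 4 * ((u + 2) * (u + 1)) from by ring,
      Nat.mul_div_cancel_left _ (by norm_num)]
end

section
/- For k > 4, there are only finitely many k-uniform isolated hypertrees (hypertrees that are simultaneously edge-minimal and edge-maximal). -/
variable {V : Type*} [DecidableEq V]

/-! ### Auxiliary lemmas -/

lemma nodup_of_toFinset_card {l : List V} (h : l.toFinset.card = l.length) : l.Nodup := by
  have h1 : l.dedup.length = l.length := by rwa [List.card_toFinset] at h
  have h2 := (l.dedup_sublist).eq_of_length h1
  rw [← h2]; exact l.nodup_dedup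

lemma windows_length (k : ℕ) (w : List V) : (windows k w).length = w.length + 1 - k := by
  unfold windows; rw [List.length_map, List.length_range]

lemma window_mem {k q : ℕ} {w : List V} (hq : q < w.length + 1 - k) :
    ((w.drop q).take k).toFinset ∈ windows k w := by
  unfold windows
  exact List.mem_map.2 ⟨q, List.mem_range.2 hq, rfl⟩

lemma windows_getElem {k q : ℕ} {w : List V} (hq : q < (windows k w).length) :
    (windows k w)[q] = ((w.drop q).take k).toFinset := by
  unfold windows at hq ⊢
  simp

lemma window_shift (k i m p : ℕ) (w : List V) (h : p + k ≤ m) :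
    (((w.drop i).take m).drop p).take k = (w.drop (i + p)).take k := by
  rw [List.drop_take, List.drop_drop, List.take_take,
    inf_eq_left.mpr (by omega : k ≤ m - p)]

lemma windows_take_drop {k i m : ℕ} {w : List V} (hk : k ≤ m) (him : i + m ≤ w.length) :
    windows k ((w.drop i).take m)
      = (List.range (m + 1 - k)).map (fun p => ((w.drop (i + p)).take k).toFinset) := by
  have hlen : ((w.drop i).take m).length = m := by
    rw [List.length_take, List.length_drop]; omega
  unfold windows
  rw [hlen]
  apply List.map_congr_left
  intro p hp
  rw [List.mem_range] at hp
  rw [window_shift k i m p w (by omega)]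

lemma windows_sub_mem {k i m : ℕ} {w : List V} (hk : k ≤ m) (him : i + m ≤ w.length)
    {e : Finset V} (he : e ∈ windows k ((w.drop i).take m)) : e ∈ windows k w := by
  rw [windows_take_drop hk him] at he
  rcases List.mem_map.1 he with ⟨p, hp, rfl⟩
  rw [List.mem_range] at hp
  exact window_mem (by omega)

lemma windows_sub_nodup {k i m : ℕ} {w : List V} (hk : k ≤ m) (him : i + m ≤ w.length)
    (hnd : (windows k w).Nodup) : (windows k ((w.drop i).take m)).Nodup := by
  rw [windows_take_drop hk him]
  unfold windows at hnd
  have hinj := List.inj_on_of_nodup_map hnd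
  apply List.Nodup.map_on _ List.nodup_range
  intro x hx y hy hxy
  rw [List.mem_range] at hx hy
  have hx' : i + x ∈ List.range (w.length + 1 - k) := List.mem_range.2 (by omega)
  have hy' : i + y ∈ List.range (w.length + 1 - k) := List.mem_range.2 (by omega)
  have hfx : ((w.drop (i + x)).take k).toFinset = ((w.drop (i + y)).take k).toFinset := hxy
  have := hinj hx' hy' hfx
  omega

lemma chain_no_repeat {k : ℕ} (hk : 2 ≤ k) {E : Finset (Finset V)} (hE : SemicycleFree k E)
    {w : List V} (hlen : k ≤ w.length) (hcard : ∀ e ∈ windows k w, e.card = k)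
    (hnd : (windows k w).Nodup) (hmem : ∀ e ∈ windows k w, e ∈ E) : w.Nodup := by
  have key : ∀ a b (ha : a < w.length) (hb : b < w.length), a < b → w[a] ≠ w[b] := by
    intro a b ha hb hab heq
    rcases Nat.lt_or_ge (b - a) k with hsmall | hbig
    · -- both indices lie in a common window, which has distinct entries
      set p := b + 1 - k with hp
      have hpk : p + k ≤ w.length := by omega
      have hwin : ((w.drop p).take k).toFinset ∈ windows k w := window_mem (by omega)
      have hlenl : ((w.drop p).take k).length = k := by
        rw [List.length_take, List.length_drop]; omega
      have hndl : ((w.drop p).take k).Nodup := by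
        apply nodup_of_toFinset_card
        rw [hlenl]; exact hcard _ hwin
      have hpa : a - p < k := by omega
      have hpb : b - p < k := by omega
      have h1 : ((w.drop p).take k)[a - p]'(by omega) = w[a]'ha := by
        rw [List.getElem_take, List.getElem_drop]
        congr 1; omega
      have h2 : ((w.drop p).take k)[b - p]'(by omega) = w[b]'hb := by
        rw [List.getElem_take, List.getElem_drop]
        congr 1; omega
      have h3 : a - p = b - p :=
        (hndl.getElem_inj_iff).1 (h1.trans (heq.trans h2.symm))
      omega
    · -- a repeat at distance ≥ k yields a semicycle
      have him : a + (b - a + 1) ≤ w.length := by omega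
      have hkm : k ≤ b - a + 1 := by omega
      have hlen' : ((w.drop a).take (b - a + 1)).length = b - a + 1 := by
        rw [List.length_take, List.length_drop]; omega
      apply hE
      refine ⟨(w.drop a).take (b - a + 1),
        ⟨by rw [hlen']; omega, ?_, ?_, windows_sub_nodup hkm him hnd⟩,
        fun e he => hmem e (windows_sub_mem hkm him he)⟩
      · rw [List.head?_eq_getElem?, List.getLast?_eq_getElem?, hlen']
        have e1 : ((w.drop a).take (b - a + 1))[0]'(by rw [hlen']; omega) = w[a]'ha := by
          rw [List.getElem_take, List.getElem_drop]; congr 1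
        have e2 : ((w.drop a).take (b - a + 1))[b - a + 1 - 1]'(by rw [hlen']; omega)
            = w[b]'hb := by
          rw [List.getElem_take, List.getElem_drop]; congr 1; omega
        rw [List.getElem?_eq_getElem (by rw [hlen']; omega : 0 < ((w.drop a).take (b - a + 1)).length),
          List.getElem?_eq_getElem (by rw [hlen']; omega :
            b - a + 1 - 1 < ((w.drop a).take (b - a + 1)).length)]
        rw [e1, e2, heq]
      · intro e he
        exact hcard e (windows_sub_mem hkm him he)
  rw [List.nodup_iff_injective_getElem]
  rintro ⟨x, hx⟩ ⟨y, hy⟩ hxy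
  simp only at hxy
  rcases Nat.lt_trichotomy x y with h | h | h
  · exact absurd hxy (key x y hx hy h)
  · exact Fin.ext h
  · exact absurd hxy.symm (key y x hy hx h)

lemma adjacent_kernel {k a : ℕ} {w : List V} (hk : 2 ≤ k)
    (ha : a + 1 < (windows k w).length)
    (hcards : ∀ e ∈ windows k w, e.card = k) :
    ∃ K : Finset V, K.card = k - 1 ∧
      K ⊆ (windows k w)[a]'(by omega) ∧ K ⊆ (windows k w)[a+1]'ha := by
  have hm := windows_length k w
  have hwl : a + 1 + k ≤ w.length := by omega
  have hwina : (windows k w)[a]'(by omega) = ((w.drop a).take k).toFinset :=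
    windows_getElem (by omega)
  have hwina1 : (windows k w)[a+1]'ha = ((w.drop (a+1)).take k).toFinset :=
    windows_getElem ha
  have hl1 : ((w.drop (a + 1)).take k).length = k := by
    rw [List.length_take, List.length_drop]; omega
  have hl1card : ((w.drop (a + 1)).take k).toFinset.card = k := by
    rw [← hwina1]; exact hcards _ (List.getElem_mem ha)
  have hl1nd : ((w.drop (a + 1)).take k).Nodup := by
    apply nodup_of_toFinset_card; rw [hl1]; exact hl1card
  have hKeq : (w.drop (a + 1)).take (k - 1) = ((w.drop (a + 1)).take k).take (k - 1) := by
    rw [List.take_take, inf_eq_left.mpr (by omega : k - 1 ≤ k)]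
  have hKnd : ((w.drop (a + 1)).take (k - 1)).Nodup := by
    rw [hKeq]; exact (List.take_sublist _ _).nodup hl1nd
  have hKlen : ((w.drop (a + 1)).take (k - 1)).length = k - 1 := by
    rw [List.length_take, List.length_drop]; omega
  refine ⟨((w.drop (a + 1)).take (k - 1)).toFinset, ?_, ?_, ?_⟩
  · rw [List.toFinset_card_of_nodup hKnd, hKlen]
  · rw [hwina]
    intro x hx
    rw [List.mem_toFinset] at hx ⊢
    have hdr : ((w.drop a).take k).drop 1 = (w.drop (a + 1)).take (k - 1) := by
      rw [List.drop_take, List.drop_drop]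
    exact (hdr ▸ List.drop_sublist 1 ((w.drop a).take k)).subset hx
  · rw [hwina1]
    intro x hx
    rw [List.mem_toFinset] at hx ⊢
    exact (List.take_sublist _ _).subset (hKeq ▸ hx)

lemma near_edge {k : ℕ} (hk : 2 ≤ k) {E : Finset (Finset V)} (hE : SemicycleFree k E)
    {s : Finset V} (hsE : s ∉ E) (hmax : ¬ SemicycleFree k (insert s E)) :
    ∃ e ∈ E, ∃ K : Finset V, K.card = k - 1 ∧ K ⊆ e ∧ K ⊆ s := by
  rw [SemicycleFree, not_not] at hmax
  obtain ⟨w, ⟨hklen, hheadlast, hcard, hnd⟩, hw⟩ := hmax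
  have hs : s ∈ windows k w := by
    by_contra hns
    exact hE ⟨w, ⟨hklen, hheadlast, hcard, hnd⟩, fun e he => by
      rcases Finset.mem_insert.1 (hw e he) with h | h
      · exact absurd (h ▸ he) hns
      · exact h⟩
  obtain ⟨i, hi, hsi⟩ := List.mem_iff_getElem.1 hs
  have hmval := windows_length k w
  -- at least two windows
  have hm2 : 2 ≤ (windows k w).length := by
    by_contra hm1
    have hm1' : (windows k w).length = 1 := by omega
    have hwl : w.length = k := by omega
    have hwin0 : (windows k w)[0]'(by omega) = ((w.drop 0).take k).toFinset :=
      windows_getElem (by omega)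
    have htk : (w.drop 0).take k = w := by
      rw [List.drop_zero]; exact List.take_of_length_le (by omega)
    have hwnd : w.Nodup := by
      apply nodup_of_toFinset_card
      rw [hwl]
      have := hcard _ (List.getElem_mem (by omega : 0 < (windows k w).length))
      rw [hwin0, htk] at this
      exact this
    rw [List.head?_eq_getElem?, List.getLast?_eq_getElem?,
      List.getElem?_eq_getElem (by omega : 0 < w.length),
      List.getElem?_eq_getElem (by omega : w.length - 1 < w.length)] at hheadlast
    have := (hwnd.getElem_inj_iff).1 (Option.some.inj hheadlast)
    omega
  rcases Nat.lt_or_ge (i + 1) (windows k w).length with hcase | hcase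
  · -- neighbour to the right
    obtain ⟨K, hKc, hK1, hK2⟩ := adjacent_kernel (a := i) hk hcase hcard
    refine ⟨(windows k w)[i+1]'hcase, ?_, K, hKc, hK2, by rw [hsi] at hK1; exact hK1⟩
    have hemem := hw _ (List.getElem_mem hcase)
    rcases Finset.mem_insert.1 hemem with h | h
    · exfalso
      have : i + 1 = i := (hnd.getElem_inj_iff).1 (by rw [h, ← hsi])
      omega
    · exact h
  · -- i is the last window; neighbour to the left
    obtain ⟨a, rfl⟩ : ∃ a, i = a + 1 := ⟨i - 1, by omega⟩
    have haw : a + 1 < (windows k w).length := hi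
    obtain ⟨K, hKc, hK1, hK2⟩ := adjacent_kernel (a := a) hk haw hcard
    refine ⟨(windows k w)[a]'(by omega), ?_, K, hKc, hK1, by rw [hsi] at hK2; exact hK2⟩
    have hemem := hw _ (List.getElem_mem (by omega : a < (windows k w).length))
    rcases Finset.mem_insert.1 hemem with h | h
    · exfalso
      have : a = a + 1 := (hnd.getElem_inj_iff).1 (by rw [h, ← hsi])
      omega
    · exact h

lemma maximal_lower {k n : ℕ} (hk : 2 ≤ k) {E : Finset (Finset (Fin n))}
    (huni : ∀ e ∈ E, e.card = k) (hE : SemicycleFree k E) (hmax : EdgeMaximal k E) :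
    n.choose k ≤ E.card * (1 + k * n) := by
  classical
  set B := E ∪ E.biUnion (fun e => (e.powersetCard (k-1)).biUnion
      (fun K => Finset.univ.image (fun x => insert x K))) with hB
  have hsub : (Finset.univ : Finset (Fin n)).powersetCard k ⊆ B := by
    intro s hs
    rw [Finset.mem_powersetCard] at hs
    by_cases hsE : s ∈ E
    · exact Finset.mem_union_left _ hsE
    · obtain ⟨e, heE, K, hK, hKe, hKs⟩ := near_edge hk hE hsE (hmax s hs.2 hsE)
      refine Finset.mem_union_right _ (Finset.mem_biUnion.2 ⟨e, heE,
        Finset.mem_biUnion.2 ⟨K, Finset.mem_powersetCard.2 ⟨hKe, hK⟩, ?_⟩⟩)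
      have hne : (s \ K).Nonempty := by
        rw [← Finset.card_pos, Finset.card_sdiff_of_subset hKs, hs.2, hK]; omega
      obtain ⟨x, hx⟩ := hne
      rw [Finset.mem_sdiff] at hx
      refine Finset.mem_image.2 ⟨x, Finset.mem_univ x, ?_⟩
      apply Finset.eq_of_subset_of_card_le
      · exact Finset.insert_subset hx.1 hKs
      · rw [Finset.card_insert_of_notMem hx.2, hs.2, hK]; omega
  have h1 : ((Finset.univ : Finset (Fin n)).powersetCard k).card = n.choose k := by
    rw [Finset.card_powersetCard, Finset.card_univ, Fintype.card_fin]
  have h2 : B.card ≤ E.card + E.card * (k * n) := by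
    rw [hB]
    refine le_trans (Finset.card_union_le _ _) (Nat.add_le_add_left ?_ _)
    refine le_trans Finset.card_biUnion_le ?_
    have hck : k.choose (k - 1) = k := by
      have := Nat.choose_symm (n := k) (k := 1) (by omega)
      simpa using this
    have hbound : ∀ e ∈ E, ((e.powersetCard (k-1)).biUnion
        (fun K => Finset.univ.image (fun x => insert x K))).card ≤ k * n := by
      intro e he
      refine le_trans Finset.card_biUnion_le ?_
      refine le_trans (Finset.sum_le_sum (g := fun _ => n)
        (fun K _ => le_trans Finset.card_image_le
          (le_of_eq (by rw [Finset.card_univ, Fintype.card_fin])))) ?_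
      rw [Finset.sum_const, Finset.card_powersetCard, huni e he, smul_eq_mul, hck]
    refine le_trans (Finset.sum_le_sum (g := fun _ => k * n) hbound) ?_
    rw [Finset.sum_const, smul_eq_mul]
  calc n.choose k = ((Finset.univ : Finset (Fin n)).powersetCard k).card := h1.symm
    _ ≤ B.card := Finset.card_le_card hsub
    _ ≤ E.card + E.card * (k * n) := h2
    _ = E.card * (1 + k * n) := by ring

lemma minimal_upper {k n : ℕ} (hk : 2 ≤ k) {E : Finset (Finset (Fin n))}
    (hHT : IsHypertree k E) (hmin : EdgeMinimal k E) :
    E.card ≤ n * (n * n) := by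
  classical
  obtain ⟨huni, hconn, hfree⟩ := hHT
  rcases E.eq_empty_or_nonempty with rfl | ⟨e0, he0⟩
  · simp
  have hn0 : Nonempty (Fin n) := by
    have hc := huni e0 he0
    have hne : e0.Nonempty := by rw [← Finset.card_pos, hc]; omega
    exact ⟨hne.choose⟩
  have hwit : ∀ e ∈ E, ∃ p : Fin n × Fin n, p.1 ≠ p.2 ∧
      ∀ c : List (Fin n), IsChainSeq k c → (∀ x ∈ windows k c, x ∈ E) →
        p.1 ∈ c → p.2 ∈ c → e ∈ windows k c := by
    intro e he
    have h1 := hmin e he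
    rw [ChainConn, ChainConnOn] at h1
    push_neg at h1
    obtain ⟨u, _, v, _, huv, hnc⟩ := h1
    refine ⟨(u, v), huv, ?_⟩
    intro c hc hcE huc hvc
    by_contra hne
    exact hnc c hc (fun x hx => Finset.mem_erase.2
      ⟨by rintro rfl; exact hne hx, hcE x hx⟩) huc hvc
  set f : Finset (Fin n) → Fin n × Fin n := fun e =>
    if h : e ∈ E then (hwit e h).choose else Classical.arbitrary _ with hf
  have hfspec : ∀ e (he : e ∈ E), (f e).1 ≠ (f e).2 ∧
      ∀ c : List (Fin n), IsChainSeq k c → (∀ x ∈ windows k c, x ∈ E) →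
        (f e).1 ∈ c → (f e).2 ∈ c → e ∈ windows k c := by
    intro e he
    rw [hf]; simp only [dif_pos he]
    exact (hwit e he).choose_spec
  have hcard := Finset.card_le_mul_card_image (f := f) E n (by
    intro b hb
    obtain ⟨e0', he0', hfe0⟩ := Finset.mem_image.1 hb
    have hne := (hfspec e0' he0').1
    rw [hfe0] at hne
    obtain ⟨c, hc, hcE, h1c, h2c⟩ :=
      hconn b.1 (Finset.mem_univ _) b.2 (Finset.mem_univ _) hne
    have hcnd : c.Nodup := chain_no_repeat hk hfree hc.1 hc.2.2.1 hc.2.2.2 hcE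
    have hclen : c.length ≤ n := by
      have := hcnd.length_le_card
      rwa [Fintype.card_fin] at this
    have hsub : E.filter (fun a => f a = b) ⊆ (windows k c).toFinset := by
      intro e he
      rw [Finset.mem_filter] at he
      obtain ⟨heE, hfe⟩ := he
      rw [List.mem_toFinset]
      exact (hfspec e heE).2 c hc hcE (by rw [hfe]; exact h1c) (by rw [hfe]; exact h2c)
    calc (E.filter (fun a => f a = b)).card
        ≤ (windows k c).toFinset.card := Finset.card_le_card hsub
      _ ≤ (windows k c).length := List.toFinset_card_le _
      _ = c.length + 1 - k := windows_length k c
      _ ≤ n := by omega)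
  refine le_trans hcard ?_
  have himg : (E.image f).card ≤ n * n := by
    refine le_trans (Finset.card_le_univ _) ?_
    rw [Fintype.card_prod, Fintype.card_fin]
  exact Nat.mul_le_mul_left n himg


/-- for `k > 4` there are only finitely many `k`-uniform isolated
(simultaneously edge-minimal and edge-maximal) hypertrees. -/
theorem stmt19 (k : ℕ) (hk : 4 < k) :
    ∃ N : ℕ, ∀ n : ℕ, N < n →
      ¬ ∃ E : Finset (Finset (Fin n)),
        IsHypertree k E ∧ EdgeMinimal k E ∧ EdgeMaximal k E := by
  refine ⟨64 * k.factorial * k + 2 * k, fun n hn => ?_⟩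
  rintro ⟨E, hHT, hmin, hmax⟩
  have hk2 : 2 ≤ k := by omega
  have hfac : 1 ≤ k.factorial := Nat.one_le_iff_ne_zero.2 k.factorial_ne_zero
  have hnk : 2 * k ≤ n := le_trans (Nat.le_add_left _ _) (le_of_lt hn)
  have h64 : 64 * k.factorial * k < n := lt_of_le_of_lt (Nat.le_add_right _ _) hn
  have hupper : E.card ≤ n * (n * n) := minimal_upper hk2 hHT hmin
  have hlower : n.choose k ≤ E.card * (1 + k * n) :=
    maximal_lower hk2 hHT.1 hHT.2.2 hmax
  have hcomb : n.choose k ≤ n * (n * n) * (1 + k * n) :=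
    le_trans hlower (Nat.mul_le_mul_right _ hupper)
  -- lower bound on the binomial coefficient
  set a := n + 1 - k with ha
  have ha1 : 1 ≤ a := by omega
  have h2a : n ≤ 2 * a := by omega
  have hb1 : a ^ k ≤ k.factorial * n.choose k := by
    have := Nat.pow_sub_le_descFactorial n k
    rwa [Nat.descFactorial_eq_factorial_mul_choose] at this
  have hb2 : a ^ 5 ≤ a ^ k := Nat.pow_le_pow_right (by omega) (by omega)
  have hb3 : n ^ 5 ≤ 32 * a ^ 5 := by
    calc n ^ 5 ≤ (2 * a) ^ 5 := Nat.pow_le_pow_left h2a 5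
      _ = 32 * a ^ 5 := by ring
  have hn4 : 0 < n ^ 4 := Nat.pow_pos (by omega)
  have hb4 : 64 * k.factorial * k * n ^ 4 < n ^ 5 := by
    calc 64 * k.factorial * k * n ^ 4 < n * n ^ 4 :=
          mul_lt_mul_of_pos_right h64 hn4
      _ = n ^ 5 := by ring
  have hb5 : 32 * (k.factorial * (n * (n * n) * (1 + k * n)))
      ≤ 64 * k.factorial * k * n ^ 4 := by
    have e1 : n * (n * n) * (1 + k * n) = n ^ 3 + k * n ^ 4 := by ring
    rw [e1]
    have e2 : n ^ 3 ≤ n ^ 4 := Nat.pow_le_pow_right (by omega) (by omega)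
    calc 32 * (k.factorial * (n ^ 3 + k * n ^ 4))
        ≤ 32 * (k.factorial * (n ^ 4 + k * n ^ 4)) :=
          Nat.mul_le_mul_left _ (Nat.mul_le_mul_left _ (Nat.add_le_add_right e2 _))
      _ = 32 * (1 + k) * k.factorial * n ^ 4 := by ring
      _ ≤ 64 * k * k.factorial * n ^ 4 :=
          Nat.mul_le_mul_right _ (Nat.mul_le_mul_right _ (by omega))
      _ = 64 * k.factorial * k * n ^ 4 := by ring
  have hfinal : k.factorial * (n * (n * n) * (1 + k * n)) < k.factorial * n.choose k := by
    have h32 : 32 * (k.factorial * (n * (n * n) * (1 + k * n)))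
        < 32 * (k.factorial * n.choose k) := by
      calc 32 * (k.factorial * (n * (n * n) * (1 + k * n)))
          ≤ 64 * k.factorial * k * n ^ 4 := hb5
        _ < n ^ 5 := hb4
        _ ≤ 32 * a ^ 5 := hb3
        _ ≤ 32 * a ^ k := Nat.mul_le_mul_left _ hb2
        _ ≤ 32 * (k.factorial * n.choose k) := Nat.mul_le_mul_left _ hb1
    exact Nat.lt_of_mul_lt_mul_left h32
  have hlt : n * (n * n) * (1 + k * n) < n.choose k := Nat.lt_of_mul_lt_mul_left hfinal
  exact absurd hcomb (not_le.2 hlt)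
end
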